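/- For each natural number n, there exist metric spaces X and Y, each homeomorphic to the Cantor space {0,1}^ℕ, and a continuous surjection F : X → Y such that F is isometrically containing for the class 𝒟_n of non-expanding surjections between metric spaces having at most n points and diameter at most 1; that is, for every pair of metric spaces K, L with at most n points each and diameter ≤ 1 and every surjective 1-Lipschitz map g : K → L, there exist isometric embeddings i : K → X and j : L → Y with F ∘ i = j ∘ g. -/

import Mathlib

open PiNat

noncomputable section CIC

/-- Wrapper around Cantor space carrying the `PiNat` ultrametric. -/
structure UC : Type where
  val : ℕ → Bool

instance : MetricSpace UC :=
  MetricSpace.induced UC.val (fun a b h => by cases a; cases b; simpa using h)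
    (PiNat.metricSpace)

open Classical in
theorem UC.dist_def (u u' : UC) :
    dist u u' = (if u.val ≠ u'.val then (1/2 : ℝ) ^ (PiNat.firstDiff u.val u'.val) else 0) := rfl

theorem UC.dist_le_pow {u u' : UC} {m : ℕ} (h : ∀ p, p < m → u.val p = u'.val p) :
    dist u u' ≤ (1/2 : ℝ) ^ m := by
  classical
  rw [UC.dist_def]
  split_ifs with hne
  · apply pow_le_pow_of_le_one (by norm_num) (by norm_num)
    by_contra hlt
    push_neg at hlt
    exact PiNat.apply_firstDiff_ne hne (h _ hlt)
  · positivity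

theorem UC.continuous_mk : Continuous UC.mk := by
  rw [continuous_induced_rng]; exact continuous_id

/-- digit decoding: pairs of booleans to a number in {-1,0,1} -/
def tb (b1 b2 : Bool) : ℝ := if b1 then 1 else if b2 then -1 else 0

theorem tb_abs_le (b1 b2 : Bool) : |tb b1 b2| ≤ 1 := by
  rcases b1 <;> rcases b2 <;> simp [tb]

theorem continuous_tb : Continuous (fun p : Bool × Bool => tb p.1 p.2) :=
  continuous_of_discreteTopology

theorem summable_half_pow_succ : Summable (fun i : ℕ => (1/2 : ℝ) ^ (i+1)) := by
  have h : Summable (fun i : ℕ => (1/2:ℝ)^i) := summable_geometric_of_lt_one (by norm_num) (by norm_num)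
  exact (h.mul_right (1/2)).congr (fun i => (pow_succ (1/2:ℝ) i).symm)

/-- The decoding map on Cantor space: reads signed binary digits starting at
position `2*(n+3)`, and returns twice the value. -/
def rho (n : ℕ) (x : ℕ → Bool) : ℝ :=
  2 * ∑' i : ℕ, tb (x (2*(n+3) + 2*i)) (x (2*(n+3) + 2*i + 1)) * (1/2 : ℝ) ^ (i+1)

theorem rho_summable (n : ℕ) (x : ℕ → Bool) :
    Summable (fun i : ℕ => tb (x (2*(n+3) + 2*i)) (x (2*(n+3) + 2*i + 1)) * (1/2 : ℝ) ^ (i+1)) := by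
  apply Summable.of_norm_bounded (g := fun i : ℕ => (1/2 : ℝ) ^ (i+1)) (summable_half_pow_succ)
  intro i
  rw [norm_mul]
  calc ‖tb _ _‖ * ‖(1/2 : ℝ)^(i+1)‖ ≤ 1 * ‖(1/2 : ℝ)^(i+1)‖ := by
        apply mul_le_mul_of_nonneg_right (tb_abs_le _ _) (norm_nonneg _)
    _ = (1/2 : ℝ)^(i+1) := by
        rw [one_mul, Real.norm_eq_abs, abs_of_nonneg (by positivity)]

theorem continuous_rho (n : ℕ) : Continuous (rho n) := by
  unfold rho
  apply Continuous.mul continuous_const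
  apply continuous_tsum (u := fun i : ℕ => (1/2:ℝ)^(i+1))
  · intro i
    apply Continuous.mul _ continuous_const
    exact continuous_tb.comp (Continuous.prodMk (continuous_apply _) (continuous_apply _))
  · exact summable_half_pow_succ
  · intro i x
    rw [norm_mul]
    calc ‖tb _ _‖ * ‖(1/2 : ℝ)^(i+1)‖ ≤ 1 * ‖(1/2 : ℝ)^(i+1)‖ := by
          apply mul_le_mul_of_nonneg_right (tb_abs_le _ _) (norm_nonneg _)
      _ = (1/2 : ℝ)^(i+1) := by
          rw [one_mul, Real.norm_eq_abs, abs_of_nonneg (by positivity)]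

namespace Code

/-- the gap threshold at level `m` (with parameter `n`). -/
def gap (n m : ℕ) : ℝ := (1/2 : ℝ) ^ (m + (n+3))

theorem gap_pos (n m : ℕ) : 0 < gap n m := by unfold gap; positivity

theorem gap_anti (n : ℕ) {m m' : ℕ} (h : m ≤ m') : gap n m' ≤ gap n m := by
  apply pow_le_pow_of_le_one (by norm_num) (by norm_num)
  omega

theorem gap_le_pow (n m : ℕ) : gap n m ≤ (1/2 : ℝ)^m := by
  apply pow_le_pow_of_le_one (by norm_num) (by norm_num)
  omega

/-- `v` and `w` are separated in `S` by an adjacent pair at distance `> g`. -/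
def SepP (S : Finset ℝ) (g v w : ℝ) : Prop :=
  ∃ a ∈ S, ∃ b ∈ S, min v w ≤ a ∧ a < b ∧ b ≤ max v w ∧ (∀ x ∈ S, x ≤ a ∨ b ≤ x) ∧ g < b - a

/-- `v ≈ w` at level `m`: no separating gap of size `> gap n m`. -/
def rel (n : ℕ) (S : Finset ℝ) (m : ℕ) (v w : ℝ) : Prop := ¬ SepP S (gap n m) v w

theorem sepP_symm {S : Finset ℝ} {g v w : ℝ} (h : SepP S g v w) : SepP S g w v := by
  rwa [SepP, min_comm w v, max_comm w v]

theorem sepP_mono {S : Finset ℝ} {g g' v w : ℝ} (hg : g ≤ g') (h : SepP S g' v w) :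
    SepP S g v w := by
  obtain ⟨a, ha, b, hb, h1, h2, h3, h4, h5⟩ := h
  exact ⟨a, ha, b, hb, h1, h2, h3, h4, lt_of_le_of_lt hg h5⟩

theorem sepP_widen {S : Finset ℝ} {g v w v' w' : ℝ} (h1 : min v w ≤ min v' w')
    (h2 : max v' w' ≤ max v w) (h : SepP S g v' w') : SepP S g v w := by
  obtain ⟨a, ha, b, hb, ha1, hab, hb1, hadj, hg⟩ := h
  exact ⟨a, ha, b, hb, le_trans h1 ha1, hab, le_trans hb1 h2, hadj, hg⟩

theorem rel_refl (n : ℕ) (S : Finset ℝ) (m : ℕ) (v : ℝ) : rel n S m v v := by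
  rintro ⟨a, _, b, _, h1, hab, h3, _, _⟩
  simp only [min_self, max_self] at h1 h3
  linarith

theorem rel_symm {n : ℕ} {S : Finset ℝ} {m : ℕ} {v w : ℝ} (h : rel n S m v w) :
    rel n S m w v := fun hs => h (sepP_symm hs)

theorem rel_mono {n : ℕ} {S : Finset ℝ} {m m' : ℕ} {v w : ℝ} (hm : m ≤ m')
    (h : rel n S m' v w) : rel n S m v w :=
  fun hs => h (sepP_mono (gap_anti n hm) hs)

theorem sepP_split {S : Finset ℝ} {g u w z : ℝ} (hw : w ∈ S) (h : SepP S g u z) :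
    SepP S g u w ∨ SepP S g w z := by
  obtain ⟨a, ha, b, hb, h1, hab, h2, hadj, hg⟩ := h
  rcases hadj w hw with hwa | hbw
  · rcases le_total u z with huz | hzu
    · right
      refine ⟨a, ha, b, hb, le_trans (min_le_left _ _) hwa, hab, ?_, hadj, hg⟩
      calc b ≤ max u z := h2
        _ = z := max_eq_right huz
        _ ≤ max w z := le_max_right _ _
    · left
      refine ⟨a, ha, b, hb, le_trans (min_le_right _ _) hwa, hab, ?_, hadj, hg⟩
      calc b ≤ max u z := h2
        _ = u := max_eq_left hzu
        _ ≤ max u w := le_max_left _ _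
  · rcases le_total u z with huz | hzu
    · left
      refine ⟨a, ha, b, hb, ?_, hab, le_trans hbw (le_max_right _ _), hadj, hg⟩
      calc min u w ≤ u := min_le_left _ _
        _ = min u z := (min_eq_left huz).symm
        _ ≤ a := h1
    · right
      refine ⟨a, ha, b, hb, ?_, hab, le_trans hbw (le_max_left _ _), hadj, hg⟩
      calc min w z ≤ z := min_le_right _ _
        _ = min u z := (min_eq_right hzu).symm
        _ ≤ a := h1

theorem rel_trans {n : ℕ} {S : Finset ℝ} {m : ℕ} {u w z : ℝ} (hw : w ∈ S)
    (h1 : rel n S m u w) (h2 : rel n S m w z) : rel n S m u z := by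
  intro hs
  rcases sepP_split hw hs with h | h
  · exact h1 h
  · exact h2 h

theorem abs_lt_of_not_rel {n : ℕ} {S : Finset ℝ} {m : ℕ} {v w : ℝ}
    (h : ¬ rel n S m v w) : gap n m < |v - w| := by
  rw [rel, not_not] at h
  obtain ⟨a, _, b, _, h1, hab, h2, _, hg⟩ := h
  calc gap n m < b - a := hg
    _ ≤ max v w - min v w := by gcongr
    _ = |v - w| := by rw [max_sub_min_eq_abs, abs_sub_comm]

/-- chained points are close: the key diameter bound. -/
theorem close_of_not_sepP {S : Finset ℝ} {g : ℝ} (hg : 0 ≤ g) :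
    ∀ N : ℕ, ∀ v ∈ S, ∀ w ∈ S, v ≤ w → ¬ SepP S g v w →
      (S.filter (fun x => v ≤ x ∧ x ≤ w)).card ≤ N → w - v ≤ N * g := by
  classical
  intro N
  induction N with
  | zero =>
    intro v hv w hw hvw _ hcard
    exfalso
    have : v ∈ S.filter (fun x => v ≤ x ∧ x ≤ w) := by
      simp [Finset.mem_filter, hv, hvw]
    have := Finset.card_pos.mpr ⟨v, this⟩
    omega
  | succ N ih =>
    intro v hv w hw hvw hsep hcard
    rcases eq_or_lt_of_le hvw with rfl | hlt
    · have : (0:ℝ) ≤ (N+1 : ℕ) * g := by positivity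
      linarith
    · set T := S.filter (fun x => v < x ∧ x ≤ w) with hT
      have hwT : w ∈ T := by simp [hT, Finset.mem_filter, hw, hlt]
      have hTne : T.Nonempty := ⟨w, hwT⟩
      set b := T.min' hTne with hb
      have hbT : b ∈ T := Finset.min'_mem _ _
      rw [hT, Finset.mem_filter] at hbT
      obtain ⟨hbS, hvb, hbw⟩ := hbT
      have hadj : ∀ x ∈ S, x ≤ v ∨ b ≤ x := by
        intro x hx
        by_cases h1 : x ≤ v
        · exact Or.inl h1
        · push_neg at h1
          by_cases h2 : x ≤ w
          · exact Or.inr (Finset.min'_le _ _ (by simp [hT, Finset.mem_filter, hx, h1, h2]))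
          · push_neg at h2
            exact Or.inr (le_of_lt (lt_of_le_of_lt hbw h2))
      have hbv : b - v ≤ g := by
        by_contra hc
        push_neg at hc
        exact hsep ⟨v, hv, b, hbS, by simp [min_eq_left hvw], hvb, by
          simp [max_eq_right hvw, hbw], hadj, hc⟩
      have hsep2 : ¬ SepP S g b w := by
        intro hs
        apply hsep
        apply sepP_widen _ _ hs
        · rw [min_eq_left hvw, min_eq_left hbw]
          exact le_of_lt hvb
        · rw [max_eq_right hvw, max_eq_right hbw]
      have hsub : S.filter (fun x => b ≤ x ∧ x ≤ w) ⊆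
          (S.filter (fun x => v ≤ x ∧ x ≤ w)).erase v := by
        intro x hx
        rw [Finset.mem_filter] at hx
        rw [Finset.mem_erase, Finset.mem_filter]
        refine ⟨?_, hx.1, le_trans (le_of_lt hvb) hx.2.1, hx.2.2⟩
        intro hxv
        rw [hxv] at hx
        exact absurd hx.2.1 (not_le.mpr hvb)
      have hcard2 : (S.filter (fun x => b ≤ x ∧ x ≤ w)).card ≤ N := by
        have h1 := Finset.card_le_card hsub
        have hvmem : v ∈ S.filter (fun x => v ≤ x ∧ x ≤ w) := by
          simp [Finset.mem_filter, hv, hvw]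
        have h2 := Finset.card_erase_of_mem hvmem
        omega
      have := ih b hbS w hw hbw hsep2 hcard2
      push_cast
      push_cast at this
      linarith

theorem abs_le_of_rel {n : ℕ} {S : Finset ℝ} (hcard : S.card ≤ n) {m : ℕ} {v w : ℝ}
    (hv : v ∈ S) (hw : w ∈ S) (h : rel n S m v w) : |v - w| ≤ n * gap n m := by
  classical
  have key : ∀ v ∈ S, ∀ w ∈ S, v ≤ w → rel n S m v w → w - v ≤ n * gap n m := by
    intro v hv w hw hvw hrel
    apply close_of_not_sepP (le_of_lt (gap_pos n m)) n v hv w hw hvw hrel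
    calc (S.filter (fun x => v ≤ x ∧ x ≤ w)).card ≤ S.card := Finset.card_filter_le _ _
      _ ≤ n := hcard
  rcases le_total v w with hvw | hwv
  · rw [abs_sub_comm, abs_of_nonneg (by linarith)]
    exact key v hv w hw hvw h
  · rw [abs_of_nonneg (by linarith)]
    exact key w hw v hv hwv (rel_symm h)

open Classical in
/-- the representative of the cluster of `v` at level `m`: minimum of the cluster. -/
noncomputable def rep (n : ℕ) (S : Finset ℝ) (m : ℕ) (v : ℝ) : ℝ :=
  if h : (S.filter (rel n S m v)).Nonempty then (S.filter (rel n S m v)).min' h else v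

theorem rep_spec {n : ℕ} {S : Finset ℝ} {m : ℕ} {v : ℝ} (hv : v ∈ S) :
    rep n S m v ∈ S ∧ rel n S m v (rep n S m v) := by
  classical
  have hne : (S.filter (rel n S m v)).Nonempty :=
    ⟨v, Finset.mem_filter.mpr ⟨hv, rel_refl n S m v⟩⟩
  have hmem := Finset.min'_mem _ hne
  rw [Finset.mem_filter] at hmem
  rw [rep, dif_pos hne]
  exact hmem

theorem rep_mem {n : ℕ} {S : Finset ℝ} {m : ℕ} {v : ℝ} (hv : v ∈ S) : rep n S m v ∈ S :=
  (rep_spec hv).1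

theorem rep_rel {n : ℕ} {S : Finset ℝ} {m : ℕ} {v : ℝ} (hv : v ∈ S) :
    rel n S m v (rep n S m v) := (rep_spec hv).2

theorem rep_congr {n : ℕ} {S : Finset ℝ} {m : ℕ} {v w : ℝ} (hv : v ∈ S) (hw : w ∈ S)
    (h : rel n S m v w) : rep n S m v = rep n S m w := by
  classical
  have hfe : S.filter (rel n S m v) = S.filter (rel n S m w) := by
    apply Finset.filter_congr
    intro u _
    constructor
    · intro hu
      exact rel_trans hv (rel_symm h) hu
    · intro hu
      exact rel_trans hw h hu
  have hnew : (S.filter (rel n S m w)).Nonempty :=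
    ⟨w, Finset.mem_filter.mpr ⟨hw, rel_refl n S m w⟩⟩
  simp only [rep, hfe, dif_pos hnew]

theorem rep_close {n : ℕ} {S : Finset ℝ} (hcard : S.card ≤ n) {m : ℕ} {v : ℝ}
    (hv : v ∈ S) : |rep n S m v - v| ≤ n * gap n m := by
  rw [abs_sub_comm]
  exact abs_le_of_rel hcard hv (rep_mem hv) (rep_rel hv)

open Classical in
/-- the centers of the nested signed-binary intervals used to encode `v`. -/
noncomputable def cc (n : ℕ) (S : Finset ℝ) : ℕ → ℝ → ℝ
  | 0, _ => 0
  | (m+1), v =>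
    cc n S m v +
      (tb (decide ((1/2:ℝ)^(m+2) < rep n S (m+1) v - cc n S m v))
          (decide (rep n S (m+1) v - cc n S m v < -((1/2:ℝ)^(m+2))))) * (1/2:ℝ)^(m+1)

open Classical in
/-- the `m`-th signed digit of the code of `v`. -/
noncomputable def dgR (n : ℕ) (S : Finset ℝ) (m : ℕ) (v : ℝ) : ℝ :=
  tb (decide ((1/2:ℝ)^(m+2) < rep n S (m+1) v - cc n S m v))
     (decide (rep n S (m+1) v - cc n S m v < -((1/2:ℝ)^(m+2))))

theorem cc_succ (n : ℕ) (S : Finset ℝ) (m : ℕ) (v : ℝ) :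
    cc n S (m+1) v = cc n S m v + dgR n S m v * (1/2:ℝ)^(m+1) := rfl

open Classical in
theorem digit_approx {dlt eps : ℝ} (heps : 0 ≤ eps) (h : |dlt| ≤ 3*eps) :
    |dlt - tb (decide (eps < dlt)) (decide (dlt < -eps)) * (2*eps)| ≤ eps := by
  rw [abs_le] at h
  by_cases h1 : eps < dlt
  · rw [decide_eq_true h1]
    simp only [tb, if_true]
    rw [abs_le]
    constructor <;> linarith
  · rw [decide_eq_false h1]
    by_cases h2 : dlt < -eps
    · rw [decide_eq_true h2]
      simp only [tb, if_false, if_true, Bool.false_eq_true]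
      rw [abs_le]
      push_neg at h1
      constructor <;> linarith
    · rw [decide_eq_false h2]
      simp only [tb, if_false, Bool.false_eq_true]
      push_neg at h1 h2
      rw [abs_le]
      constructor <;> linarith

theorem n_gap_le (n m : ℕ) : (n:ℝ) * gap n m ≤ (1/2:ℝ)^(m+3) := by
  have h1 : (n:ℝ) ≤ 2^n := by
    exact_mod_cast le_of_lt (Nat.lt_two_pow_self (n := n))
  have h2 : gap n m = (1/2:ℝ)^(m+3) * (1/2:ℝ)^n := by
    rw [gap, ← pow_add]
    ring_nf
  rw [h2]
  rw [show (n:ℝ) * ((1/2:ℝ)^(m+3) * (1/2:ℝ)^n) = ((n:ℝ) * (1/2:ℝ)^n) * (1/2:ℝ)^(m+3) by ring]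
  have h3 : (n:ℝ) * (1/2:ℝ)^n ≤ 1 := by
    rw [div_pow, one_pow, mul_div_assoc']
    rw [div_le_one (by positivity)]
    simpa using h1
  nlinarith [pow_pos (by norm_num : (0:ℝ) < 1/2) (m+3)]

theorem cc_invariant {n : ℕ} {S : Finset ℝ} (hS : ∀ v ∈ S, v ∈ Set.Icc (0:ℝ) (1/2))
    (hcard : S.card ≤ n) {v : ℝ} (hv : v ∈ S) :
    ∀ m, |rep n S m v - cc n S m v| ≤ (1/2:ℝ)^(m+1) := by
  intro m
  induction m with
  | zero =>
    have h := rep_mem (n := n) (m := 0) hv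
    have h2 := hS _ h
    rw [Set.mem_Icc] at h2
    simp only [cc, sub_zero]
    rw [abs_le]
    have hp : ((1:ℝ)/2)^(0+1) = 1/2 := by norm_num
    rw [hp]
    constructor <;> linarith [h2.1, h2.2]
  | succ m ih =>
    have e1 : |rep n S (m+1) v - v| ≤ (1/2:ℝ)^(m+4) := by
      calc |rep n S (m+1) v - v| ≤ n * gap n (m+1) := rep_close hcard hv
        _ ≤ (1/2:ℝ)^(m+1+3) := n_gap_le n (m+1)
        _ = (1/2:ℝ)^(m+4) := by ring_nf
    have e2 : |v - rep n S m v| ≤ (1/2:ℝ)^(m+3) := by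
      rw [abs_sub_comm]
      calc |rep n S m v - v| ≤ n * gap n m := rep_close hcard hv
        _ ≤ (1/2:ℝ)^(m+3) := n_gap_le n m
    have hsplit : rep n S (m+1) v - cc n S m v =
        (rep n S (m+1) v - v) + (v - rep n S m v) + (rep n S m v - cc n S m v) := by ring
    have habs : |rep n S (m+1) v - cc n S m v| ≤
        |rep n S (m+1) v - v| + |v - rep n S m v| + |rep n S m v - cc n S m v| := by
      rw [hsplit]
      exact abs_add_three _ _ _
    have hpows : (1/2:ℝ)^(m+4) + (1/2:ℝ)^(m+3) + (1/2:ℝ)^(m+1) ≤ 3 * (1/2:ℝ)^(m+2) := by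
      have h4 : (1/2:ℝ)^(m+4) = (1/2:ℝ)^m * (1/16) := by rw [pow_add]; norm_num
      have h3 : (1/2:ℝ)^(m+3) = (1/2:ℝ)^m * (1/8) := by rw [pow_add]; norm_num
      have h1 : (1/2:ℝ)^(m+1) = (1/2:ℝ)^m * (1/2) := by rw [pow_add]; norm_num
      have h2 : (1/2:ℝ)^(m+2) = (1/2:ℝ)^m * (1/4) := by rw [pow_add]; norm_num
      rw [h4, h3, h1, h2]
      nlinarith [pow_pos (by norm_num : (0:ℝ) < 1/2) m]
    have hd : |rep n S (m+1) v - cc n S m v| ≤ 3 * (1/2:ℝ)^(m+2) := by linarith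
    have := digit_approx (by positivity : (0:ℝ) ≤ (1/2:ℝ)^(m+2)) hd
    rw [cc_succ]
    have h2 : (2:ℝ) * (1/2:ℝ)^(m+2) = (1/2:ℝ)^(m+1) := by
      rw [pow_succ]
      ring
    rw [h2] at this
    calc |rep n S (m+1) v - (cc n S m v + dgR n S m v * (1/2:ℝ)^(m+1))|
        = |rep n S (m+1) v - cc n S m v - dgR n S m v * (1/2:ℝ)^(m+1)| := by ring_nf
      _ ≤ (1/2:ℝ)^(m+2) := this
      _ = (1/2:ℝ)^(m+1+1) := by ring_nf

theorem cc_close {n : ℕ} {S : Finset ℝ} (hS : ∀ v ∈ S, v ∈ Set.Icc (0:ℝ) (1/2))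
    (hcard : S.card ≤ n) {v : ℝ} (hv : v ∈ S) (m : ℕ) :
    |v - cc n S m v| ≤ (1/2:ℝ)^m := by
  have e1 : |v - rep n S m v| ≤ (1/2:ℝ)^(m+3) := by
    rw [abs_sub_comm]
    exact le_trans (rep_close hcard hv) (n_gap_le n m)
  have e2 := cc_invariant hS hcard hv m
  have e3 : |v - cc n S m v| ≤ |v - rep n S m v| + |rep n S m v - cc n S m v| := by
    have hsplit : v - cc n S m v = (v - rep n S m v) + (rep n S m v - cc n S m v) := by ring
    rw [hsplit]
    exact abs_add_le _ _
  have hpows : (1/2:ℝ)^(m+3) + (1/2:ℝ)^(m+1) ≤ (1/2:ℝ)^m := by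
    have h3 : (1/2:ℝ)^(m+3) = (1/2:ℝ)^m * (1/8) := by rw [pow_add]; norm_num
    have h1 : (1/2:ℝ)^(m+1) = (1/2:ℝ)^m * (1/2) := by rw [pow_add]; norm_num
    rw [h3, h1]
    nlinarith [pow_pos (by norm_num : (0:ℝ) < 1/2) m]
  linarith

theorem cc_congr {n : ℕ} {S : Finset ℝ} {v w : ℝ} (hv : v ∈ S) (hw : w ∈ S) :
    ∀ m, rel n S m v w → cc n S m v = cc n S m w := by
  intro m
  induction m with
  | zero => intro _; rfl
  | succ m ih =>
    intro h
    have hm : rel n S m v w := rel_mono (Nat.le_succ m) h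
    have hccm := ih hm
    have hrep := rep_congr hv hw h
    rw [cc_succ, cc_succ, hccm, dgR, dgR, hrep, hccm]

theorem sum_dgR {n : ℕ} {S : Finset ℝ} (v : ℝ) (m : ℕ) :
    ∑ i ∈ Finset.range m, dgR n S i v * (1/2:ℝ)^(i+1) = cc n S m v := by
  induction m with
  | zero => simp [cc]
  | succ m ih => rw [Finset.sum_range_succ, ih, cc_succ]

open Classical in
/-- The code of a real `v` relative to the finite set `S`: `2*(n+3)` leading `false`s,
then the signed digits, each encoded by two booleans. -/
noncomputable def code (n : ℕ) (S : Finset ℝ) (v : ℝ) : ℕ → Bool := fun p =>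
  if p < 2*(n+3) then false
  else if (p - 2*(n+3)) % 2 = 0 then
    decide ((1/2:ℝ)^(((p - 2*(n+3))/2)+2) <
      rep n S (((p - 2*(n+3))/2)+1) v - cc n S ((p - 2*(n+3))/2) v)
  else
    decide (rep n S (((p - 2*(n+3))/2)+1) v - cc n S ((p - 2*(n+3))/2) v
      < -((1/2:ℝ)^(((p - 2*(n+3))/2)+2)))

open Classical in
theorem code_low {n : ℕ} {S : Finset ℝ} {v : ℝ} {p : ℕ} (hp : p < 2*(n+3)) :
    code n S v p = false := by
  rw [code, if_pos hp]

open Classical in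
theorem code_even (n : ℕ) (S : Finset ℝ) (v : ℝ) (i : ℕ) :
    code n S v (2*(n+3) + 2*i) =
      decide ((1/2:ℝ)^(i+2) < rep n S (i+1) v - cc n S i v) := by
  rw [code]
  have h1 : ¬ (2*(n+3) + 2*i < 2*(n+3)) := by omega
  have h2 : (2*(n+3) + 2*i) - 2*(n+3) = 2*i := by omega
  rw [if_neg h1, h2]
  have h3 : (2*i) % 2 = 0 := by omega
  have h4 : (2*i) / 2 = i := by omega
  rw [if_pos h3, h4]

open Classical in
theorem code_odd (n : ℕ) (S : Finset ℝ) (v : ℝ) (i : ℕ) :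
    code n S v (2*(n+3) + 2*i + 1) =
      decide (rep n S (i+1) v - cc n S i v < -((1/2:ℝ)^(i+2))) := by
  rw [code]
  have h1 : ¬ (2*(n+3) + 2*i + 1 < 2*(n+3)) := by omega
  have h2 : (2*(n+3) + 2*i + 1) - 2*(n+3) = 2*i+1 := by omega
  rw [if_neg h1, h2]
  have h3 : ¬ ((2*i+1) % 2 = 0) := by omega
  have h4 : (2*i+1) / 2 = i := by omega
  rw [if_neg h3, h4]

theorem tb_code (n : ℕ) (S : Finset ℝ) (v : ℝ) (i : ℕ) :
    tb (code n S v (2*(n+3) + 2*i)) (code n S v (2*(n+3) + 2*i + 1)) = dgR n S i v := by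
  rw [code_even, code_odd, dgR]

/-- decoding recovers the value exactly. -/
theorem rho_code {n : ℕ} {S : Finset ℝ} (hS : ∀ v ∈ S, v ∈ Set.Icc (0:ℝ) (1/2))
    (hcard : S.card ≤ n) {v : ℝ} (hv : v ∈ S) : rho n (code n S v) = 2 * v := by
  have hsummable := rho_summable n (code n S v)
  have hpartial : ∀ m : ℕ, ∑ i ∈ Finset.range m,
      tb (code n S v (2*(n+3) + 2*i)) (code n S v (2*(n+3) + 2*i + 1)) * (1/2:ℝ)^(i+1)
      = cc n S m v := by
    intro m
    rw [Finset.sum_congr rfl (fun i _ => by rw [tb_code])]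
    exact sum_dgR v m
  have hlim : Filter.Tendsto (fun m => cc n S m v) Filter.atTop (nhds v) := by
    rw [tendsto_iff_dist_tendsto_zero]
    have hb : ∀ m : ℕ, dist (cc n S m v) v ≤ (1/2:ℝ)^m := by
      intro m
      rw [Real.dist_eq, abs_sub_comm]
      exact cc_close hS hcard hv m
    exact squeeze_zero (fun m => dist_nonneg) hb
      (tendsto_pow_atTop_nhds_zero_of_lt_one (by norm_num) (by norm_num))
  have hto_v : Filter.Tendsto (fun m => ∑ i ∈ Finset.range m,
      tb (code n S v (2*(n+3) + 2*i)) (code n S v (2*(n+3) + 2*i + 1)) * (1/2:ℝ)^(i+1))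
      Filter.atTop (nhds v) := hlim.congr (fun m => (hpartial m).symm)
  have htsum : (∑' i : ℕ,
      tb (code n S v (2*(n+3) + 2*i)) (code n S v (2*(n+3) + 2*i + 1)) * (1/2:ℝ)^(i+1)) = v :=
    tendsto_nhds_unique hsummable.hasSum.tendsto_sum_nat hto_v
  rw [rho, htsum]

/-- the crucial ultrametric bound on codes. -/
theorem dist_code {n : ℕ} {S : Finset ℝ} (hcard : S.card ≤ n)
    {v w : ℝ} (hv : v ∈ S) (hw : w ∈ S) :
    dist (UC.mk (code n S v)) (UC.mk (code n S w)) ≤ 2 * |v - w| := by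
  rcases eq_or_ne v w with rfl | hne
  · simp
  have habs : 0 < |v - w| := by
    rw [abs_pos]
    intro h0
    exact hne (by linarith)
  -- there is a level at which v and w are not related
  have hex : ∃ m, ¬ rel n S m v w := by
    obtain ⟨m, hm⟩ := exists_pow_lt_of_lt_one (div_pos habs (by positivity : (0:ℝ) < n+1))
      (by norm_num : (1/2:ℝ) < 1)
    refine ⟨m, fun hrel => ?_⟩
    have h1 := abs_le_of_rel hcard hv hw hrel
    have h2 : (n:ℝ) * gap n m ≤ (n:ℝ) * (1/2:ℝ)^m := by
      apply mul_le_mul_of_nonneg_left (gap_le_pow n m) (Nat.cast_nonneg n)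
    have h3 : (n:ℝ) * (1/2:ℝ)^m < |v - w| := by
      have hn1 : (n:ℝ) ≤ (n:ℝ)+1 := by linarith
      calc (n:ℝ) * (1/2:ℝ)^m ≤ ((n:ℝ)+1) * (1/2:ℝ)^m := by
            apply mul_le_mul_of_nonneg_right hn1 (by positivity)
        _ < ((n:ℝ)+1) * (|v - w| / ((n:ℝ)+1)) := by
            apply mul_lt_mul_of_pos_left hm (by positivity)
        _ = |v - w| := by field_simp
    linarith
  classical
  set M := Nat.find hex with hM
  have hMspec : ¬ rel n S M v w := Nat.find_spec hex
  have hMmin : ∀ m, m < M → rel n S m v w := by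
    intro m hm
    by_contra hc
    have : M ≤ m := Nat.find_le hc
    omega
  have hfar : gap n M < |v - w| := abs_lt_of_not_rel hMspec
  -- codes agree below 2*(n+3) + 2*(M-1)
  have hagree : ∀ p, p < 2*(n+3) + 2*(M-1) → code n S v p = code n S w p := by
    intro p hp
    by_cases hlow : p < 2*(n+3)
    · rw [code_low hlow, code_low hlow]
    · push_neg at hlow
      set q := p - 2*(n+3) with hq
      have hdm := Nat.div_add_mod q 2
      have hm01 : q % 2 = 0 ∨ q % 2 = 1 := Nat.mod_two_eq_zero_or_one q
      have hiM : q/2 + 1 < M := by omega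
      have hrel1 : rel n S (q/2+1) v w := hMmin _ hiM
      have hreli : rel n S (q/2) v w := rel_mono (by omega) hrel1
      have hrep := rep_congr hv hw hrel1
      have hcc := cc_congr hv hw (q/2) hreli
      rcases hm01 with h0 | h1
      · have hpe : p = 2*(n+3) + 2*(q/2) := by omega
        rw [hpe, code_even, code_even, hrep, hcc]
      · have hpe : p = 2*(n+3) + 2*(q/2) + 1 := by omega
        rw [hpe, code_odd, code_odd, hrep, hcc]
  have hdle : dist (UC.mk (code n S v)) (UC.mk (code n S w)) ≤ (1/2:ℝ)^(2*(n+3) + 2*(M-1)) :=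
    UC.dist_le_pow hagree
  -- and the separation bound: gap n M = (1/2)^(M + n+3) < |v-w|
  have hexp : (1/2:ℝ)^(2*(n+3) + 2*(M-1)) ≤ 2 * gap n M := by
    have h2 : 2 * gap n M = 2 * (1/2:ℝ)^(M + (n+3)) := rfl
    rw [h2]
    have hh : (1/2:ℝ)^(2*(n+3) + 2*(M-1)) ≤ (1/2:ℝ)^(M + (n+3)) := by
      apply pow_le_pow_of_le_one (by norm_num) (by norm_num)
      omega
    have hpos : (0:ℝ) < (1/2:ℝ)^(M + (n+3)) := by positivity
    linarith
  calc dist (UC.mk (code n S v)) (UC.mk (code n S w))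
      ≤ (1/2:ℝ)^(2*(n+3) + 2*(M-1)) := hdle
    _ ≤ 2 * gap n M := hexp
    _ ≤ 2 * |v - w| := by linarith

end Code

/-! ### The spaces X and Y -/

/-- the space `Y`: `n` coding strands plus one tie-break strand. -/
structure YS (n : ℕ) : Type where
  b : Fin n → ℕ → Bool
  s : ℕ → Bool

/-- the space `X`: `n` coding strands for the source, plus a copy of `Y`. -/
structure XS (n : ℕ) : Type where
  a : Fin n → ℕ → Bool
  b : Fin n → ℕ → Bool
  s : ℕ → Bool

variable {n : ℕ}

/-- embedding of `Y` into the ambient metric product. -/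
def PhiY (n : ℕ) (y : YS n) : (Fin n → ℝ) × (Fin n → UC) × UC :=
  ⟨fun k => rho n (y.b k), fun k => UC.mk (y.b k), UC.mk y.s⟩

theorem PhiY_injective (n : ℕ) : Function.Injective (PhiY n) := by
  rintro ⟨b, s⟩ ⟨b', s'⟩ h
  rw [PhiY, PhiY, Prod.mk.injEq, Prod.mk.injEq] at h
  obtain ⟨-, h2, h3⟩ := h
  congr 1
  · funext k
    have := congrFun h2 k
    simpa using this
  · simpa using h3

noncomputable instance YS.metricSpace (n : ℕ) : MetricSpace (YS n) :=
  MetricSpace.induced (PhiY n) (PhiY_injective n) inferInstance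

/-- embedding of `X` into the ambient metric product. -/
def PhiX (n : ℕ) (x : XS n) :
    (Fin n → ℝ) × (Fin n → UC) × ((Fin n → ℝ) × (Fin n → UC) × UC) :=
  ⟨fun k => rho n (x.a k), fun k => UC.mk (x.a k), PhiY n ⟨x.b, x.s⟩⟩

theorem PhiX_injective (n : ℕ) : Function.Injective (PhiX n) := by
  rintro ⟨a, b, s⟩ ⟨a', b', s'⟩ h
  rw [PhiX, PhiX, Prod.mk.injEq, Prod.mk.injEq] at h
  obtain ⟨-, h2, h3⟩ := h
  have h4 := PhiY_injective n h3
  rw [YS.mk.injEq] at h4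
  congr 1
  · funext k
    have := congrFun h2 k
    simpa using this
  · exact h4.1
  · exact h4.2

noncomputable instance XS.metricSpace (n : ℕ) : MetricSpace (XS n) :=
  MetricSpace.induced (PhiX n) (PhiX_injective n) inferInstance

theorem YS.dist_eq (y y' : YS n) :
    dist y y' = max (dist (fun k => rho n (y.b k)) (fun k => rho n (y'.b k)))
      (max (dist (fun k => UC.mk (y.b k)) (fun k => UC.mk (y'.b k))) (dist (UC.mk y.s) (UC.mk y'.s))) := by
  rw [show dist y y' = dist (PhiY n y) (PhiY n y') from rfl, Prod.dist_eq, Prod.dist_eq]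
  rfl

theorem XS.dist_eq (x x' : XS n) :
    dist x x' = max (dist (fun k => rho n (x.a k)) (fun k => rho n (x'.a k)))
      (max (dist (fun k => UC.mk (x.a k)) (fun k => UC.mk (x'.a k)))
        (dist (YS.mk x.b x.s) (YS.mk x'.b x'.s))) := by
  rw [show dist x x' = dist (PhiX n x) (PhiX n x') from rfl, Prod.dist_eq, Prod.dist_eq]
  rfl

/-- the projection from `X` to `Y`. -/
def Fmap (n : ℕ) (x : XS n) : YS n := ⟨x.b, x.s⟩

theorem Fmap_lipschitz (n : ℕ) : LipschitzWith 1 (Fmap n) := by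
  apply LipschitzWith.of_dist_le_mul
  intro x x'
  rw [NNReal.coe_one, one_mul, XS.dist_eq]
  exact le_max_of_le_right (le_max_right _ _)

theorem Fmap_surjective (n : ℕ) : Function.Surjective (Fmap n) :=
  fun y => ⟨⟨y.b, y.b, y.s⟩, rfl⟩

/-! ### Homeomorphisms with Cantor space -/

theorem isometry_PhiY (n : ℕ) : Isometry (PhiY n) := fun _ _ => rfl

theorem isometry_PhiX (n : ℕ) : Isometry (PhiX n) := fun _ _ => rfl

/-- the underlying equivalence of `Y` with a product. -/
def equivY (n : ℕ) : ((Fin n → (ℕ → Bool)) × (ℕ → Bool)) ≃ YS n where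
  toFun := fun p => ⟨p.1, p.2⟩
  invFun := fun y => (y.b, y.s)
  left_inv := fun _ => rfl
  right_inv := fun _ => rfl

/-- the underlying equivalence of `X` with a product. -/
def equivX (n : ℕ) : ((Fin n → (ℕ → Bool)) × ((Fin n → (ℕ → Bool)) × (ℕ → Bool))) ≃ XS n where
  toFun := fun p => ⟨p.1, p.2.1, p.2.2⟩
  invFun := fun x => (x.a, x.b, x.s)
  left_inv := fun _ => rfl
  right_inv := fun _ => rfl

theorem continuous_equivY (n : ℕ) : Continuous (equivY n) := by
  rw [(isometry_PhiY n).isEmbedding.continuous_iff]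
  have : (PhiY n) ∘ (equivY n) = fun p => (fun k => rho n (p.1 k),
      fun k => UC.mk (p.1 k), UC.mk p.2) := rfl
  rw [this]
  refine Continuous.prodMk ?_ (Continuous.prodMk ?_ ?_)
  · exact continuous_pi fun k => (continuous_rho n).comp ((continuous_apply k).comp continuous_fst)
  · exact continuous_pi fun k => UC.continuous_mk.comp ((continuous_apply k).comp continuous_fst)
  · exact UC.continuous_mk.comp continuous_snd

theorem continuous_equivX (n : ℕ) : Continuous (equivX n) := by
  rw [(isometry_PhiX n).isEmbedding.continuous_iff]
  have : (PhiX n) ∘ (equivX n) = fun p => (fun k => rho n (p.1 k),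
      fun k => UC.mk (p.1 k), fun k => rho n (p.2.1 k),
      fun k => UC.mk (p.2.1 k), UC.mk p.2.2) := rfl
  rw [this]
  have c21 : Continuous fun p : ((Fin n → (ℕ → Bool)) × ((Fin n → (ℕ → Bool)) × (ℕ → Bool))) =>
      p.2.1 := continuous_fst.comp continuous_snd
  have c22 : Continuous fun p : ((Fin n → (ℕ → Bool)) × ((Fin n → (ℕ → Bool)) × (ℕ → Bool))) =>
      p.2.2 := continuous_snd.comp continuous_snd
  refine Continuous.prodMk ?_ (Continuous.prodMk ?_ (Continuous.prodMk ?_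
    (Continuous.prodMk ?_ ?_)))
  · exact continuous_pi fun k => (continuous_rho n).comp ((continuous_apply k).comp continuous_fst)
  · exact continuous_pi fun k => UC.continuous_mk.comp ((continuous_apply k).comp continuous_fst)
  · exact continuous_pi fun k => (continuous_rho n).comp ((continuous_apply k).comp c21)
  · exact continuous_pi fun k => UC.continuous_mk.comp ((continuous_apply k).comp c21)
  · exact UC.continuous_mk.comp c22

/-- the auxiliary product-with-Cantor equivalence. -/
def equivPC (m : ℕ) : ((Fin m → (ℕ → Bool)) × (ℕ → Bool)) ≃ (ℕ → Bool) :=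
  (Equiv.prodComm _ _).trans ((Fin.consEquiv (fun _ : Fin (m+1) => (ℕ → Bool))).trans
    (((Equiv.curry _ _ _).symm).trans
      (Equiv.arrowCongr ((Equiv.prodComm _ _).trans (Nat.divModEquiv (m+1)).symm)
        (Equiv.refl Bool))))

theorem continuous_equivPC (m : ℕ) : Continuous (equivPC m) := by
  have key : ∀ (j : Fin (m+1)) (i : ℕ),
      Continuous (fun p : (Fin m → (ℕ → Bool)) × (ℕ → Bool) => (Fin.cons p.2 p.1 : Fin (m+1) → ℕ → Bool) j i) := by
    intro j i
    refine Fin.cases ?_ ?_ j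
    · simp only [Fin.cons_zero]; exact (continuous_apply i).comp continuous_snd
    · intro k
      simp only [Fin.cons_succ]; exact (continuous_apply i).comp ((continuous_apply k).comp continuous_fst)
  have hE : ⇑(equivPC m) = fun p q => (Fin.cons p.2 p.1 : Fin (m+1) → ℕ → Bool)
      ((Nat.divModEquiv (m+1)) q).2 ((Nat.divModEquiv (m+1)) q).1 := rfl
  rw [hE]
  exact continuous_pi fun q => key _ _

/-- the product-with-Cantor homeomorphism. -/
noncomputable def homeoPC (m : ℕ) : ((Fin m → (ℕ → Bool)) × (ℕ → Bool)) ≃ₜ (ℕ → Bool) :=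
  Continuous.homeoOfEquivCompactToT2 (f := equivPC m) (continuous_equivPC m)

/-- `Y` is homeomorphic to Cantor space. -/
noncomputable def homeoY (n : ℕ) : YS n ≃ₜ (ℕ → Bool) :=
  (Continuous.homeoOfEquivCompactToT2 (f := equivY n) (continuous_equivY n)).symm.trans
    (homeoPC n)

/-- `X` is homeomorphic to Cantor space. -/
noncomputable def homeoX (n : ℕ) : XS n ≃ₜ (ℕ → Bool) :=
  (Continuous.homeoOfEquivCompactToT2 (f := equivX n) (continuous_equivX n)).symm.trans
    (((Homeomorph.refl _).prodCongr (homeoPC n)).trans (homeoPC n))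

/-! ### Embedding finite metric spaces -/

theorem exists_strands (n : ℕ) (L : Type) [MetricSpace L] [Finite L] [Nonempty L]
    (hcard : Nat.card L ≤ n) (hdiam : Metric.diam (Set.univ : Set L) ≤ 1) :
    ∃ f : L → Fin n → (ℕ → Bool),
      (∀ y y' k, |rho n (f y k) - rho n (f y' k)| ≤ dist y y') ∧
      (∀ y y', ∃ k, |rho n (f y k) - rho n (f y' k)| = dist y y') ∧
      (∀ y y' k, dist (UC.mk (f y k)) (UC.mk (f y' k)) ≤ dist y y') := by
  classical
  letI := Fintype.ofFinite L
  set c := Fintype.card L with hc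
  have hcpos : 0 < c := Fintype.card_pos
  have hcn : c ≤ n := by
    rw [hc, ← Nat.card_eq_fintype_card]
    exact hcard
  set e := (Fintype.equivFin L) with he
  set σ : Fin n → L := fun k => e.symm ⟨k.val % c, Nat.mod_lt _ hcpos⟩ with hσ
  set τ : L → Fin n := fun y => ⟨(e y).val, lt_of_lt_of_le (e y).isLt hcn⟩ with hτ
  have hστ : ∀ y, σ (τ y) = y := by
    intro y
    simp only [hσ, hτ]
    have hfin : (⟨(e y).val % c, Nat.mod_lt _ hcpos⟩ : Fin (Fintype.card L)) = e y :=
      Fin.ext (Nat.mod_eq_of_lt (e y).isLt)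
    rw [hfin, e.symm_apply_apply]
  set Sk : Fin n → Finset ℝ := fun k => Finset.image (fun z => dist z (σ k) / 2) Finset.univ
    with hSk
  have hmem : ∀ (y : L) (k : Fin n), dist y (σ k) / 2 ∈ Sk k := by
    intro y k
    rw [hSk]
    exact Finset.mem_image_of_mem _ (Finset.mem_univ y)
  have hbd : Bornology.IsBounded (Set.univ : Set L) := Set.finite_univ.isBounded
  have hSIcc : ∀ k : Fin n, ∀ v ∈ Sk k, v ∈ Set.Icc (0:ℝ) (1/2) := by
    intro k v hv
    rw [hSk, Finset.mem_image] at hv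
    obtain ⟨z, -, rfl⟩ := hv
    have h1 : dist z (σ k) ≤ 1 := by
      calc dist z (σ k) ≤ Metric.diam (Set.univ : Set L) :=
            Metric.dist_le_diam_of_mem hbd (Set.mem_univ _) (Set.mem_univ _)
        _ ≤ 1 := hdiam
    constructor
    · positivity
    · linarith
  have hScard : ∀ k : Fin n, (Sk k).card ≤ n := by
    intro k
    calc (Sk k).card ≤ Finset.univ.card := Finset.card_image_le
      _ = c := by rw [Finset.card_univ]
      _ ≤ n := hcn
  refine ⟨fun y k => Code.code n (Sk k) (dist y (σ k) / 2), ?_, ?_, ?_⟩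
  · intro y y' k
    rw [Code.rho_code (hSIcc k) (hScard k) (hmem y k),
        Code.rho_code (hSIcc k) (hScard k) (hmem y' k)]
    have h2 : 2 * (dist y (σ k) / 2) - 2 * (dist y' (σ k) / 2)
        = dist y (σ k) - dist y' (σ k) := by ring
    rw [h2]
    exact abs_dist_sub_le y y' (σ k)
  · intro y y'
    refine ⟨τ y, ?_⟩
    rw [Code.rho_code (hSIcc (τ y)) (hScard (τ y)) (hmem y (τ y)),
        Code.rho_code (hSIcc (τ y)) (hScard (τ y)) (hmem y' (τ y))]
    rw [hστ y, dist_self]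
    rw [show (2:ℝ) * (0/2) - 2 * (dist y' y / 2) = -(dist y' y) by ring, abs_neg,
      abs_of_nonneg dist_nonneg, dist_comm]
  · intro y y' k
    calc dist (UC.mk (Code.code n (Sk k) (dist y (σ k) / 2)))
          (UC.mk (Code.code n (Sk k) (dist y' (σ k) / 2)))
        ≤ 2 * |dist y (σ k) / 2 - dist y' (σ k) / 2| :=
          Code.dist_code (hScard k) (hmem y k) (hmem y' k)
      _ = |dist y (σ k) - dist y' (σ k)| := by
          rw [show dist y (σ k) / 2 - dist y' (σ k) / 2
            = (dist y (σ k) - dist y' (σ k))/2 by ring]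
          rw [abs_div, abs_two]
          ring
      _ ≤ dist y y' := abs_dist_sub_le y y' (σ k)

end CIC

/-- For each natural number `n`, there exist metric spaces `X` and `Y`, each homeomorphic
to the Cantor space `ℕ → Bool`, and a continuous surjection `F : X → Y` which is
isometrically containing for the class of non-expanding surjections between metric
spaces with at most `n` points and diameter at most `1`. -/
theorem cantor_isometrically_containing (n : ℕ) :
    ∃ (X Y : Type) (_ : MetricSpace X) (_ : MetricSpace Y) (F : X → Y),
      Nonempty (X ≃ₜ (ℕ → Bool)) ∧ Nonempty (Y ≃ₜ (ℕ → Bool)) ∧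
      Continuous F ∧ Function.Surjective F ∧
      ∀ (K L : Type) (_ : MetricSpace K) (_ : MetricSpace L),
        Finite K → Nat.card K ≤ n → Metric.diam (Set.univ : Set K) ≤ 1 →
        Finite L → Nat.card L ≤ n → Metric.diam (Set.univ : Set L) ≤ 1 →
        ∀ g : K → L, Function.Surjective g → LipschitzWith 1 g →
          ∃ (i : K → X) (j : L → Y), Isometry i ∧ Isometry j ∧ F ∘ i = j ∘ g := by
  classical
  refine ⟨XS n, YS n, inferInstance, inferInstance, Fmap n, ⟨homeoX n⟩, ⟨homeoY n⟩,
    (Fmap_lipschitz n).continuous, Fmap_surjective n, ?_⟩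
  intro K L instK instL hKfin hKcard hKdiam hLfin hLcard hLdiam g hgsurj hglip
  cases isEmpty_or_nonempty K with
  | inl hKe =>
    have hLe : IsEmpty L := ⟨fun y => (hgsurj y).elim (fun x _ => hKe.false x)⟩
    exact ⟨fun x => hKe.elim x, fun y => hLe.elim y, fun x => hKe.elim x,
      fun y => hLe.elim y, funext fun x => hKe.elim x⟩
  | inr hKne =>
    haveI := hKfin
    haveI := hLfin
    haveI hLne : Nonempty L := Nonempty.map g hKne
    obtain ⟨fK, hK1, hK2, hK3⟩ := exists_strands n K hKcard hKdiam
    obtain ⟨fL, hL1, hL2, hL3⟩ := exists_strands n L hLcard hLdiam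
    set jm : L → YS n := fun y => ⟨fL y, fun _ => false⟩ with hjm
    set im : K → XS n := fun x => ⟨fK x, fL (g x), fun _ => false⟩ with him
    have hjdist : ∀ y y', dist (jm y) (jm y') = dist y y' := by
      intro y y'
      rw [YS.dist_eq]
      apply le_antisymm
      · apply max_le
        · rw [dist_pi_le_iff dist_nonneg]
          intro k
          rw [Real.dist_eq]
          exact hL1 y y' k
        · apply max_le
          · rw [dist_pi_le_iff dist_nonneg]
            intro k
            exact hL3 y y' k
          · rw [show (UC.mk (jm y).s) = UC.mk (jm y').s from rfl, dist_self]
            exact dist_nonneg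
      · obtain ⟨k, hk⟩ := hL2 y y'
        calc dist y y' = dist (rho n ((jm y).b k)) (rho n ((jm y').b k)) := by
              rw [Real.dist_eq]
              exact hk.symm
          _ ≤ dist (fun k => rho n ((jm y).b k)) (fun k => rho n ((jm y').b k)) :=
              dist_le_pi_dist (fun k => rho n ((jm y).b k)) (fun k => rho n ((jm y').b k)) k
          _ ≤ _ := le_max_left _ _
    have hglip' : ∀ x x', dist (g x) (g x') ≤ dist x x' := by
      intro x x'
      have := hglip.dist_le_mul x x'
      rwa [NNReal.coe_one, one_mul] at this
    have hidist : ∀ x x', dist (im x) (im x') = dist x x' := by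
      intro x x'
      rw [XS.dist_eq]
      have hYpart : (YS.mk (im x).b (im x).s) = jm (g x) := rfl
      have hYpart' : (YS.mk (im x').b (im x').s) = jm (g x') := rfl
      apply le_antisymm
      · apply max_le
        · rw [dist_pi_le_iff dist_nonneg]
          intro k
          rw [Real.dist_eq]
          exact hK1 x x' k
        · apply max_le
          · rw [dist_pi_le_iff dist_nonneg]
            intro k
            exact hK3 x x' k
          · rw [hYpart, hYpart', hjdist]
            exact hglip' x x'
      · obtain ⟨k, hk⟩ := hK2 x x'
        calc dist x x' = dist (rho n ((im x).a k)) (rho n ((im x').a k)) := by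
              rw [Real.dist_eq]
              exact hk.symm
          _ ≤ dist (fun k => rho n ((im x).a k)) (fun k => rho n ((im x').a k)) :=
              dist_le_pi_dist (fun k => rho n ((im x).a k)) (fun k => rho n ((im x').a k)) k
          _ ≤ _ := le_max_left _ _
    exact ⟨im, jm, Isometry.of_dist_eq hidist, Isometry.of_dist_eq hjdist,
      funext fun x => rfl⟩
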